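/- The number of cyclically reduced necklaces of length ℓ in the free group of rank g (equivalence classes of reduced, cyclically reduced words under cyclic rotation) equals (1/ℓ)·Σ_{d|ℓ} φ(d)·C(g, ℓ/d), where C(g,m) = (2g−1)^m + 1 for m odd and (2g−1)^m + 2g−1 for m even. -/

import Mathlib

/-- `a` and `b` are mutually inverse letters. -/
def IsInvPair {α : Type*} (a b : α × Bool) : Prop := a.1 = b.1 ∧ a.2 = !b.2

/-- A word is cyclically reduced if no two cyclically adjacent letters
(including the last/first pair) are mutually inverse. -/
def CyclicallyReduced {α : Type*} (l : List (α × Bool)) : Prop :=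
  (l.Chain' fun a b => ¬ IsInvPair a b) ∧
    ∀ a b, l.getLast? = some a → l.head? = some b → ¬ IsInvPair a b

/-- The number of cyclically reduced words of length `m` in the free group of
rank `g`. -/
def Cred (g m : ℕ) : ℕ :=
  if Odd m then (2 * g - 1) ^ m + 1 else (2 * g - 1) ^ m + (2 * g - 1)

open Finset List

section Basic

variable {β : Type*}

/-- the inverse letter -/
def linv (a : β × Bool) : β × Bool := (a.1, !a.2)

lemma isInvPair_iff (a b : β × Bool) : IsInvPair a b ↔ b = linv a := by
  constructor
  · rintro ⟨h1, h2⟩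
    cases a; cases b
    simp only [linv, Prod.mk.injEq] at *
    simp_all
  · rintro rfl
    exact ⟨rfl, by simp [linv]⟩

lemma linv_linv (a : β × Bool) : linv (linv a) = a := by simp [linv]

lemma linv_ne (a : β × Bool) : linv a ≠ a := by
  intro h
  have := congrArg Prod.snd h
  simp [linv] at this

/-- the no-inverse relation -/
def NI (a b : β × Bool) : Prop := ¬ IsInvPair a b

lemma NI_iff (a b : β × Bool) : NI a b ↔ b ≠ linv a := by
  rw [NI, isInvPair_iff]

lemma cr_iff_chain (a : β × Bool) (t : List (β × Bool)) :
    CyclicallyReduced (a :: t) ↔ List.Chain' NI ((a :: t) ++ [a]) := by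
  rw [CyclicallyReduced]; simp only [List.Chain']; rw [List.isChain_append]
  constructor
  · rintro ⟨h1, h2⟩
    refine ⟨h1, List.isChain_singleton _, ?_⟩
    intro x hx y hy
    simp only [List.head?_cons, Option.mem_def, Option.some.injEq] at hy
    subst hy
    exact h2 x a (by simpa using hx) (by simp)
  · rintro ⟨h1, -, h3⟩
    refine ⟨h1, ?_⟩
    intro x y hx hy
    simp only [List.head?_cons, Option.some.injEq] at hy
    subst hy
    exact h3 x (by simpa using hx) a (by simp)

end Basic

section Rotate

variable {β : Type*}

lemma cr_rotate_one (l : List (β × Bool)) (h : CyclicallyReduced l) :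
    CyclicallyReduced (l.rotate 1) := by
  match l with
  | [] => simpa using h
  | [a] => simpa using h
  | a :: b :: t =>
    have hrot : (a :: b :: t).rotate 1 = (b :: t) ++ [a] := by
      simpa using List.rotate_cons_succ (b :: t) a 0
    rw [hrot]
    rw [cr_iff_chain] at h
    have h' : NI a b ∧ List.Chain' NI ((b :: t) ++ [a]) := by
      have := (List.isChain_cons_cons (R := NI) (a := a) (b := b) (l := t ++ [a])).mp (by simpa [List.Chain'] using h)
      exact ⟨this.1, this.2⟩
    show CyclicallyReduced ((b :: (t ++ [a])))
    rw [cr_iff_chain]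
    simp only [List.Chain']; rw [List.isChain_append]
    refine ⟨by simpa [List.Chain'] using h'.2, List.isChain_singleton _, ?_⟩
    intro x hx y hy
    simp only [List.head?_cons, Option.mem_def, Option.some.injEq] at hy
    subst hy
    have : (b :: (t ++ [a])).getLast? = some a := by
      simpa using List.getLast?_concat (a := a) (l := b :: t)
    rw [Option.mem_def, this] at hx
    cases hx
    exact h'.1

lemma cr_rotate (l : List (β × Bool)) (k : ℕ) (h : CyclicallyReduced l) :
    CyclicallyReduced (l.rotate k) := by
  induction k generalizing l with
  | zero => simpa using h
  | succ n ih =>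
    have : l.rotate (n + 1) = (l.rotate 1).rotate n := by
      rw [List.rotate_rotate, Nat.add_comm]
    rw [this]
    exact ih _ (cr_rotate_one l h)

end Rotate

section Periodic

variable {β : Type*}

lemma length_flatten_replicate (q : ℕ) (u : List β) :
    ((List.replicate q u).flatten).length = q * u.length := by
  induction q with
  | zero => simp
  | succ n ih => simp [List.replicate_succ, ih, Nat.succ_mul, Nat.add_comm]

lemma flatten_replicate_succ (q : ℕ) (u : List β) :
    (List.replicate (q + 1) u).flatten = u ++ (List.replicate q u).flatten := by
  simp [List.replicate_succ]

lemma rotate_flatten_replicate (q : ℕ) (u : List β) (hq : 0 < q) :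
    ((List.replicate q u).flatten).rotate u.length = (List.replicate q u).flatten := by
  obtain ⟨q, rfl⟩ := Nat.exists_eq_add_of_lt hq
  rw [Nat.zero_add, flatten_replicate_succ]
  rw [List.rotate_eq_drop_append_take (by simp [length_flatten_replicate])]
  rw [List.drop_left' rfl, List.take_left' rfl]
  have : (List.replicate q u).flatten ++ u = (List.replicate (q + 1) u).flatten := by
    rw [List.replicate_succ', List.flatten_append]
    simp
  rw [this, flatten_replicate_succ]

/-- A word of length divisible by `d` which is invariant under rotation by `d`
is the `(length/d)`-th power of its prefix of length `d`. -/
lemma eq_flatten_replicate_of_rotate {d : ℕ} (hd : 0 < d) :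
    ∀ (n : ℕ) (L : List β), L.length = n → d ∣ n → L.rotate d = L →
      L = (List.replicate (n / d) (L.take d)).flatten := by
  intro n
  induction n using Nat.strong_induction_on with
  | _ n ih =>
    intro L hlen hdvd hrot
    rcases Nat.eq_zero_or_pos n with hn | hn
    · subst hn
      rw [List.length_eq_zero_iff] at hlen
      subst hlen
      simp
    have hdle : d ≤ n := Nat.le_of_dvd hn hdvd
    have hdleL : d ≤ L.length := by omega
    rcases eq_or_lt_of_le hdle with heq | hlt
    · subst heq
      rw [Nat.div_self hd]
      simp only [List.replicate_one, List.flatten_cons, List.flatten_nil, List.append_nil]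
      rw [List.take_of_length_le (le_of_eq hlen)]
    · -- d < n
      have h2d : 2 * d ≤ n := by
        obtain ⟨q, hq⟩ := hdvd
        rcases q with _ | _ | q
        · simp at hq; omega
        · simp at hq; omega
        · have : n = d * q + 2 * d := by rw [hq]; ring
          omega
      have hdleL' : d ≤ (L.drop d).length := by rw [List.length_drop]; omega
      have htlen : (L.take d).length = d := by rw [List.length_take]; omega
      have hrot2 : L.drop d ++ L.take d = L := by
        rw [← List.rotate_eq_drop_append_take hdleL]
        exact hrot
      have hcomm : L.take d ++ L.drop d = L.drop d ++ L.take d := by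
        rw [List.take_append_drop, hrot2]
      have h1 : (L.take d ++ L.drop d).take d = L.take d := List.take_left' htlen
      rw [hcomm, List.take_append_of_le_length hdleL'] at h1
      have h2 : (L.take d ++ L.drop d).drop d = L.drop d := List.drop_left' htlen
      rw [hcomm, List.drop_append_of_le_length hdleL'] at h2
      have hrotL' : (L.drop d).rotate d = L.drop d := by
        rw [List.rotate_eq_drop_append_take hdleL', h1, h2]
      have hdvd' : d ∣ n - d := Nat.dvd_sub hdvd (dvd_refl d)
      have hrec := ih (n - d) (by omega) (L.drop d) (by rw [List.length_drop]; omega)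
        hdvd' hrotL'
      rw [h1] at hrec
      have hcount : n / d = (n - d) / d + 1 := by
        have h3 := Nat.add_div_right (n - d) hd
        rw [Nat.sub_add_cancel hdle] at h3
        exact h3
      rw [hcount, flatten_replicate_succ, ← hrec, List.take_append_drop]

lemma head?_flatten_replicate (q : ℕ) (u : List β) (hq : 0 < q) (hu : u ≠ []) :
    ((List.replicate q u).flatten).head? = u.head? := by
  obtain ⟨q, rfl⟩ := Nat.exists_eq_add_of_lt hq
  rw [Nat.zero_add, flatten_replicate_succ, List.head?_append]
  cases u with
  | nil => exact absurd rfl hu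
  | cons a t => simp

lemma chain'_flatten_replicate_iff {u : List (β × Bool)} {a : β × Bool}
    (hhead : u.head? = some a) (q : ℕ) (hq : 0 < q) :
    List.Chain' NI ((List.replicate q u).flatten ++ [a]) ↔ List.Chain' NI (u ++ [a]) := by
  have hu : u ≠ [] := by
    intro h; subst h; simp at hhead
  induction q with
  | zero => omega
  | succ n ih =>
    rcases Nat.eq_zero_or_pos n with rfl | hn
    · rw [flatten_replicate_succ]
      simp
    · rw [flatten_replicate_succ, List.append_assoc]; simp only [List.Chain']; rw [List.isChain_append]
      rw [List.isChain_append (l₁ := u) (l₂ := [a])]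
      have hh : ((List.replicate n u).flatten ++ [a]).head? = some a := by
        rw [List.head?_append, head?_flatten_replicate n u hn hu, hhead]
        rfl
      constructor
      · rintro ⟨h1, h2, h3⟩
        refine ⟨h1, List.isChain_singleton _, ?_⟩
        intro x hx y hy
        simp only [List.head?_cons, Option.mem_def, Option.some.injEq] at hy
        subst hy
        exact h3 x hx a (by rw [Option.mem_def, hh])
      · rintro ⟨h1, h2, h3⟩
        refine ⟨h1, (ih hn).mpr (List.isChain_append.mpr ⟨h1, h2, h3⟩), ?_⟩
        intro x hx y hy
        rw [Option.mem_def, hh] at hy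
        cases hy
        exact h3 x hx a (by simp)

lemma cr_flatten_replicate_iff (u : List (β × Bool)) (hu : u ≠ []) (q : ℕ) (hq : 0 < q) :
    CyclicallyReduced ((List.replicate q u).flatten) ↔ CyclicallyReduced u := by
  obtain ⟨a, t, rfl⟩ := List.exists_cons_of_ne_nil hu
  have hhead : (a :: t).head? = some a := rfl
  have hflat : (List.replicate q (a :: t)).flatten ≠ [] := by
    intro h
    have hlen := length_flatten_replicate q (a :: t)
    rw [h] at hlen
    simp at hlen
    omega
  obtain ⟨b, s, hbs⟩ := List.exists_cons_of_ne_nil hflat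
  have hb : b = a := by
    have h2 := head?_flatten_replicate q (a :: t) hq hu
    rw [hbs] at h2
    simpa using h2
  subst hb
  have key := chain'_flatten_replicate_iff hhead q hq
  rw [hbs] at key
  rw [hbs, cr_iff_chain, cr_iff_chain]
  exact key

end Periodic

section Counting

open scoped Classical

open scoped Classical in
noncomputable def words (g m : ℕ) : Finset (List (Fin g × Bool)) :=
  (Finset.univ : Finset (Fin m → Fin g × Bool)).image List.ofFn

lemma mem_words {g m : ℕ} {l : List (Fin g × Bool)} : l ∈ words g m ↔ l.length = m := by
  unfold words
  simp only [Finset.mem_image, Finset.mem_univ, true_and]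
  constructor
  · rintro ⟨f, rfl⟩; simp
  · intro h
    subst h
    exact ⟨l.get, List.ofFn_get l⟩

open scoped Classical in
noncomputable def CW (g m : ℕ) : Finset (List (Fin g × Bool)) :=
  (words g m).filter CyclicallyReduced

lemma mem_CW {g m : ℕ} {l : List (Fin g × Bool)} :
    l ∈ CW g m ↔ l.length = m ∧ CyclicallyReduced l := by
  unfold CW
  rw [Finset.mem_filter, mem_words]

/-- Walk counts in the non-inverse graph: `(x, y, z) = (N(a→a), N(a→a⁻¹), N(a→b))`. -/
def XYZ (g : ℕ) : ℕ → ℕ × ℕ × ℕ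
  | 0 => (1, 0, 0)
  | k + 1 =>
    ((XYZ g k).1 + (2 * g - 2) * (XYZ g k).2.2,
      (XYZ g k).2.1 + (2 * g - 2) * (XYZ g k).2.2,
      (XYZ g k).1 + (XYZ g k).2.1 + (2 * g - 3) * (XYZ g k).2.2)

lemma xyz_succ (g k : ℕ) : XYZ g (k + 1) =
    ((XYZ g k).1 + (2 * g - 2) * (XYZ g k).2.2,
      (XYZ g k).2.1 + (2 * g - 2) * (XYZ g k).2.2,
      (XYZ g k).1 + (XYZ g k).2.1 + (2 * g - 3) * (XYZ g k).2.2) := rfl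

lemma xyz_one (g : ℕ) : XYZ g 1 = (1, 0, 1) := by
  rw [show (1 : ℕ) = 0 + 1 from rfl, xyz_succ]
  simp [XYZ]

open scoped Classical in
noncomputable def Dw (g m : ℕ) (a b : Fin g × Bool) : Finset (List (Fin g × Bool)) :=
  (words g m).filter (fun t => List.Chain' NI (a :: (t ++ [b])))

lemma mem_Dw {g m : ℕ} {a b : Fin g × Bool} {t : List (Fin g × Bool)} :
    t ∈ Dw g m a b ↔ t.length = m ∧ List.Chain' NI (a :: (t ++ [b])) := by
  unfold Dw
  rw [Finset.mem_filter, mem_words]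

lemma card_univ_letters (g : ℕ) : (Finset.univ : Finset (Fin g × Bool)).card = 2 * g := by
  simp [Finset.card_univ]
  ring

lemma card_Dw (g : ℕ) : ∀ (m : ℕ) (a b : Fin g × Bool),
    (Dw g m a b).card =
      (if b = a then (XYZ g (m + 1)).1
       else if b = linv a then (XYZ g (m + 1)).2.1
       else (XYZ g (m + 1)).2.2) := by
  classical
  intro m
  induction m with
  | zero =>
    intro a b
    have hcases : Dw g 0 a b = if b = linv a then ∅ else {[]} := by
      ext t
      rw [mem_Dw]
      constructor
      · rintro ⟨hlen, hchain⟩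
        rw [List.length_eq_zero_iff] at hlen
        subst hlen
        simp only [List.nil_append] at hchain
        have hni : NI a b := List.isChain_pair.mp hchain
        rw [NI_iff] at hni
        rw [if_neg hni]
        simp
      · intro ht
        by_cases hb : b = linv a
        · rw [if_pos hb] at ht
          simp at ht
        · rw [if_neg hb] at ht
          simp only [Finset.mem_singleton] at ht
          subst ht
          refine ⟨rfl, ?_⟩
          simp only [List.nil_append]
          exact List.isChain_pair.mpr ((NI_iff a b).mpr hb)
    rw [hcases]
    by_cases hb : b = linv a
    · have hba : b ≠ a := by rw [hb]; exact linv_ne a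
      rw [if_pos hb, if_neg hba, if_pos hb, xyz_one]
      simp
    · rw [if_neg hb, xyz_one]
      by_cases hba : b = a
      · rw [if_pos hba]; simp
      · rw [if_neg hba, if_neg hb]; simp
  | succ m ih =>
    intro a b
    have hdecomp : Dw g (m + 1) a b =
        (Finset.univ.erase (linv a)).biUnion
          (fun c => (Dw g m c b).image (c :: ·)) := by
      ext l
      simp only [mem_Dw, Finset.mem_biUnion, Finset.mem_erase, Finset.mem_univ, and_true,
        Finset.mem_image]
      constructor
      · rintro ⟨hlen, hchain⟩
        match l with
        | [] => simp at hlen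
        | c :: t =>
          have hct : List.Chain' NI (a :: c :: (t ++ [b])) := by simpa using hchain
          rw [List.Chain', List.isChain_cons_cons] at hct
          have hc : c ≠ linv a := (NI_iff a c).mp hct.1
          exact ⟨c, hc, t, ⟨by simpa using hlen, hct.2⟩, rfl⟩
      · rintro ⟨c, hc, t, ⟨hlen, hchain⟩, rfl⟩
        refine ⟨by simpa using hlen, ?_⟩
        show List.Chain' NI (a :: c :: (t ++ [b]))
        rw [List.Chain', List.isChain_cons_cons]
        exact ⟨(NI_iff a c).mpr hc, hchain⟩
    have hdisj : ∀ c₁ ∈ Finset.univ.erase (linv a), ∀ c₂ ∈ Finset.univ.erase (linv a),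
        c₁ ≠ c₂ → Disjoint ((Dw g m c₁ b).image (c₁ :: ·)) ((Dw g m c₂ b).image (c₂ :: ·)) := by
      intro c₁ _ c₂ _ hne
      rw [Finset.disjoint_left]
      rintro l hl₁ hl₂
      obtain ⟨t₁, -, rfl⟩ := Finset.mem_image.mp hl₁
      obtain ⟨t₂, -, he⟩ := Finset.mem_image.mp hl₂
      exact hne ((List.cons.inj he).1.symm)
    rw [hdecomp, Finset.card_biUnion hdisj]
    set x := (XYZ g (m + 1)).1 with hx
    set y := (XYZ g (m + 1)).2.1 with hy
    set z := (XYZ g (m + 1)).2.2 with hz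
    set F : Fin g × Bool → ℕ := fun c => if c = b then x else if c = linv b then y else z with hF
    have hf : ∀ c, ((Dw g m c b).image (c :: ·)).card = F c := by
      intro c
      have h0 : ((Dw g m c b).image (c :: ·)).card = (Dw g m c b).card := by
        apply Finset.card_image_of_injective
        intro t₁ t₂ h
        exact (List.cons.inj h).2
      rw [h0, ih c b]
      simp only [hF]
      by_cases h1 : c = b
      · rw [if_pos h1.symm, if_pos h1]
      · rw [if_neg (fun h => h1 h.symm), if_neg h1]
        by_cases h2 : c = linv b
        · rw [if_pos (by rw [h2, linv_linv]), if_pos h2]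
        · rw [if_neg (fun h => h2 (by rw [h, linv_linv])), if_neg h2]
    rw [Finset.sum_congr rfl (fun c _ => hf c)]
    have hm1 : linv b ∈ Finset.univ.erase b :=
      Finset.mem_erase.mpr ⟨linv_ne b, Finset.mem_univ _⟩
    have hconst : ∑ c ∈ (Finset.univ.erase b).erase (linv b), F c
        = ((Finset.univ.erase b).erase (linv b)).card * z := by
      have hcz : ∀ c ∈ (Finset.univ.erase b).erase (linv b), F c = z := by
        intro c hc
        obtain ⟨hc1, hc2⟩ := Finset.mem_erase.mp hc
        obtain ⟨hc3, -⟩ := Finset.mem_erase.mp hc2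
        simp only [hF]
        rw [if_neg hc3, if_neg hc1]
      rw [Finset.sum_congr rfl hcz, Finset.sum_const, smul_eq_mul]
    have hcard2 : ((Finset.univ.erase b).erase (linv b)).card = 2 * g - 2 := by
      rw [Finset.card_erase_of_mem hm1, Finset.card_erase_of_mem (Finset.mem_univ b),
        card_univ_letters]
      omega
    have e1 : ∑ c ∈ (Finset.univ.erase b).erase (linv b), F c + F (linv b)
        = ∑ c ∈ Finset.univ.erase b, F c := Finset.sum_erase_add _ _ hm1
    have e2 : ∑ c ∈ Finset.univ.erase b, F c + F b = ∑ c, F c :=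
      Finset.sum_erase_add _ _ (Finset.mem_univ b)
    have hFb : F b = x := by
      simp only [hF]
      simp
    have hFlb : F (linv b) = y := by
      simp only [hF]
      rw [if_neg (linv_ne b)]
      simp
    have hFuniv : ∑ c, F c = x + y + (2 * g - 2) * z := by
      rw [hcard2] at hconst
      omega
    have e3 : ∑ c ∈ Finset.univ.erase (linv a), F c + F (linv a) = ∑ c, F c :=
      Finset.sum_erase_add _ _ (Finset.mem_univ _)
    have ebridge : (Finset.univ.erase (linv a)).sum F
        = ∑ c ∈ Finset.univ.erase (linv a), F c := rfl
    have hx2 : (XYZ g (m + 1 + 1)).1 = x + (2 * g - 2) * z := rfl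
    have hy2 : (XYZ g (m + 1 + 1)).2.1 = y + (2 * g - 2) * z := rfl
    have hz2 : (XYZ g (m + 1 + 1)).2.2 = x + y + (2 * g - 3) * z := rfl
    rw [hx2, hy2, hz2]
    by_cases hba : b = a
    · rw [if_pos hba]
      have hFla : F (linv a) = y := by
        simp only [hF]
        rw [if_neg (by rw [hba]; exact linv_ne a), if_pos (by rw [hba])]
      omega
    · rw [if_neg hba]
      by_cases hbla : b = linv a
      · rw [if_pos hbla]
        have hFla : F (linv a) = x := by
          simp only [hF]
          rw [if_pos hbla.symm]
        omega
      · rw [if_neg hbla]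
        have hFla : F (linv a) = z := by
          simp only [hF]
          rw [if_neg (fun h : linv a = b => hbla h.symm), if_neg]
          intro h
          exact hba (by rw [← linv_linv b, ← h, linv_linv])
        rcases Nat.lt_or_ge g 2 with hg1 | hg2
        · exfalso
          rcases g with _ | _ | g'
          · exact absurd a.1.isLt (by omega)
          · have h1 : b.1 = a.1 := Fin.ext (by omega)
            have h2 : b.2 = a.2 ∨ b.2 = !a.2 := by cases b.2 <;> cases a.2 <;> simp
            rcases h2 with h2 | h2
            · exact hba (Prod.ext h1 h2)
            · exact hbla (Prod.ext h1 h2)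
          · omega
        · have hcoef : (2 * g - 2) * z = (2 * g - 3) * z + z := by
            have h4 : 2 * g - 2 = (2 * g - 3) + 1 := by omega
            rw [h4, Nat.add_mul, Nat.one_mul]
          omega

end Counting

lemma card_CW_succ (g m : ℕ) : (CW g (m + 1)).card = 2 * g * (XYZ g (m + 1)).1 := by
  classical
  have hdecomp : CW g (m + 1) =
      Finset.univ.biUnion (fun a => (Dw g m a a).image (a :: ·)) := by
    ext l
    rw [mem_CW]
    simp only [Finset.mem_biUnion, Finset.mem_univ, true_and, Finset.mem_image]
    constructor
    · rintro ⟨hlen, hcr⟩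
      match l with
      | [] => simp at hlen
      | a :: t =>
        rw [cr_iff_chain] at hcr
        refine ⟨a, t, mem_Dw.mpr ⟨by simpa using hlen, ?_⟩, rfl⟩
        simpa using hcr
    · rintro ⟨a, t, ht, rfl⟩
      obtain ⟨hlen, hchain⟩ := mem_Dw.mp ht
      refine ⟨by simpa using hlen, ?_⟩
      rw [cr_iff_chain]
      simpa using hchain
  have hdisj : ∀ c₁ ∈ (Finset.univ : Finset (Fin g × Bool)), ∀ c₂ ∈ Finset.univ,
      c₁ ≠ c₂ → Disjoint ((Dw g m c₁ c₁).image (c₁ :: ·)) ((Dw g m c₂ c₂).image (c₂ :: ·)) := by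
    intro c₁ _ c₂ _ hne
    rw [Finset.disjoint_left]
    rintro l hl₁ hl₂
    obtain ⟨t₁, -, rfl⟩ := Finset.mem_image.mp hl₁
    obtain ⟨t₂, -, he⟩ := Finset.mem_image.mp hl₂
    exact hne ((List.cons.inj he).1.symm)
  rw [hdecomp, Finset.card_biUnion hdisj]
  have hterm : ∀ a : Fin g × Bool, ((Dw g m a a).image (a :: ·)).card = (XYZ g (m + 1)).1 := by
    intro a
    have h0 : ((Dw g m a a).image (a :: ·)).card = (Dw g m a a).card := by
      apply Finset.card_image_of_injective
      intro t₁ t₂ h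
      exact (List.cons.inj h).2
    rw [h0, card_Dw g m a a, if_pos rfl]
  rw [Finset.sum_congr rfl (fun a _ => hterm a), Finset.sum_const, smul_eq_mul,
    card_univ_letters]

lemma xyz_g1 (m : ℕ) : (XYZ 1 m).1 = 1 := by
  induction m with
  | zero => rfl
  | succ k ih =>
    rw [xyz_succ]
    simp only []
    rw [ih]
    norm_num

lemma xyz_formula {g : ℕ} (hg : 2 ≤ g) (m : ℕ) :
    (2 * (g : ℤ)) * ((XYZ g m).1 : ℤ)
        = (2 * (g : ℤ) - 1) ^ m + g + (g - 1) * (-1 : ℤ) ^ m ∧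
      (2 * (g : ℤ)) * ((XYZ g m).2.1 : ℤ)
        = (2 * (g : ℤ) - 1) ^ m - g + (g - 1) * (-1 : ℤ) ^ m ∧
      (2 * (g : ℤ)) * ((XYZ g m).2.2 : ℤ)
        = (2 * (g : ℤ) - 1) ^ m - (-1 : ℤ) ^ m := by
  induction m with
  | zero =>
    refine ⟨?_, ?_, ?_⟩ <;> (show (2 * (g : ℤ)) * _ = _; norm_num [XYZ]) <;> ring
  | succ k ih =>
    obtain ⟨h1, h2, h3⟩ := ih
    have c2 : ((2 * g - 2 : ℕ) : ℤ) = 2 * (g : ℤ) - 2 := by omega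
    have c3 : ((2 * g - 3 : ℕ) : ℤ) = 2 * (g : ℤ) - 3 := by omega
    have hx2 : ((XYZ g (k + 1)).1 : ℤ)
        = ((XYZ g k).1 : ℤ) + (2 * (g : ℤ) - 2) * ((XYZ g k).2.2 : ℤ) := by
      rw [xyz_succ]
      push_cast [c2]
      ring
    have hy2 : ((XYZ g (k + 1)).2.1 : ℤ)
        = ((XYZ g k).2.1 : ℤ) + (2 * (g : ℤ) - 2) * ((XYZ g k).2.2 : ℤ) := by
      rw [xyz_succ]
      push_cast [c2]
      ring
    have hz2 : ((XYZ g (k + 1)).2.2 : ℤ)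
        = ((XYZ g k).1 : ℤ) + ((XYZ g k).2.1 : ℤ)
          + (2 * (g : ℤ) - 3) * ((XYZ g k).2.2 : ℤ) := by
      rw [xyz_succ]
      push_cast [c3]
      ring
    rw [hx2, hy2, hz2, pow_succ, pow_succ]
    refine ⟨?_, ?_, ?_⟩
    · linear_combination h1 + (2 * (g : ℤ) - 2) * h3
    · linear_combination h2 + (2 * (g : ℤ) - 2) * h3
    · linear_combination h1 + h2 + (2 * (g : ℤ) - 3) * h3

lemma card_CW_eq_Cred {g m : ℕ} (hg : 1 ≤ g) (hm : 1 ≤ m) :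
    (CW g m).card = Cred g m := by
  obtain ⟨k, rfl⟩ : ∃ k, m = k + 1 := ⟨m - 1, by omega⟩
  rw [card_CW_succ]
  rcases eq_or_lt_of_le hg with hg1 | hg2
  · subst hg1
    rw [xyz_g1]
    unfold Cred
    split <;> norm_num
  · have hg2' : 2 ≤ g := hg2
    have h1 := (xyz_formula hg2' (k + 1)).1
    have hc : ((2 * g - 1 : ℕ) : ℤ) = 2 * (g : ℤ) - 1 := by omega
    have key : ((2 * g * (XYZ g (k + 1)).1 : ℕ) : ℤ) = ((Cred g (k + 1) : ℕ) : ℤ) := by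
      unfold Cred
      split
      · next hodd =>
        rw [Odd.neg_one_pow hodd] at h1
        push_cast [hc]
        linear_combination h1
      · next hodd =>
        rw [Even.neg_one_pow (Nat.not_odd_iff_even.mp hodd)] at h1
        push_cast [hc]
        linear_combination h1
    exact_mod_cast key

section Burnside

variable {β : Type*}

lemma rotate_mul (l : List β) (p c : ℕ) (h : l.rotate p = l) : l.rotate (p * c) = l := by
  induction c with
  | zero => simp
  | succ n ih =>
    rw [Nat.mul_succ, ← List.rotate_rotate, ih, h]

lemma rotate_mod_of_rotate (l : List β) (m n : ℕ) (h : l.rotate m = l) :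
    l.rotate (n % m) = l.rotate n := by
  conv_rhs => rw [← Nat.div_add_mod n m]
  rw [← List.rotate_rotate, rotate_mul l m (n / m) h]

lemma rotate_gcd (l : List β) : ∀ a b : ℕ, l.rotate a = l → l.rotate b = l →
    l.rotate (Nat.gcd a b) = l := by
  intro a b
  induction a, b using Nat.gcd.induction with
  | H0 n =>
    intro _ h
    simpa using h
  | H1 m n hm ih =>
    intro hm' hn'
    rw [Nat.gcd_rec]
    exact ih (by rw [rotate_mod_of_rotate l m n hm', hn']) hm'

lemma stab_orb {ℓ : ℕ} [DecidableEq β] (hℓ : 0 < ℓ) (l : List β) (hl : l.length = ℓ) :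
    ((Finset.range ℓ).filter (fun k => l.rotate k = l)).card *
      ((Finset.range ℓ).image (l.rotate ·)).card = ℓ := by
  classical
  have hex : ∃ k, 0 < k ∧ l.rotate k = l := ⟨ℓ, hℓ, by rw [← hl, List.rotate_length]⟩
  obtain ⟨hppos, hprot⟩ := Nat.find_spec hex
  set p := Nat.find hex with hp
  have hmin : ∀ k, 0 < k → k < p → l.rotate k ≠ l := by
    intro k hk hkp hrot
    exact Nat.find_min hex hkp ⟨hk, hrot⟩
  have hdvd_iff : ∀ k, l.rotate k = l ↔ p ∣ k := by
    intro k
    constructor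
    · intro h
      have hmod : l.rotate (k % p) = l := by rw [rotate_mod_of_rotate l p k hprot, h]
      rcases Nat.eq_zero_or_pos (k % p) with h0 | hpos
      · exact Nat.dvd_of_mod_eq_zero h0
      · exact absurd hmod (hmin _ hpos (Nat.mod_lt k hppos))
    · rintro ⟨c, rfl⟩
      exact rotate_mul l p c hprot
  have hpl : p ∣ ℓ := (hdvd_iff ℓ).mp (by rw [← hl, List.rotate_length])
  have hple : p ≤ ℓ := Nat.le_of_dvd hℓ hpl
  have hstab : ((Finset.range ℓ).filter (fun k => l.rotate k = l)) =
      (Finset.range (ℓ / p)).image (fun j => p * j) := by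
    ext k
    simp only [Finset.mem_filter, Finset.mem_range, Finset.mem_image]
    constructor
    · rintro ⟨hk, hrot⟩
      obtain ⟨c, rfl⟩ := (hdvd_iff k).mp hrot
      exact ⟨c, by rw [Nat.lt_div_iff_mul_lt' hpl]; omega, rfl⟩
    · rintro ⟨c, hc, rfl⟩
      rw [Nat.lt_div_iff_mul_lt' hpl] at hc
      exact ⟨hc, (hdvd_iff _).mpr ⟨c, rfl⟩⟩
  have horb : ((Finset.range ℓ).image (l.rotate ·)) = (Finset.range p).image (l.rotate ·) := by
    ext m
    simp only [Finset.mem_image, Finset.mem_range]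
    constructor
    · rintro ⟨k, hk, rfl⟩
      exact ⟨k % p, Nat.mod_lt k hppos, rotate_mod_of_rotate l p k hprot⟩
    · rintro ⟨k, hk, rfl⟩
      exact ⟨k, lt_of_lt_of_le hk hple, rfl⟩
  have hkey : ∀ i j : ℕ, i ≤ j → j < p → l.rotate i = l.rotate j → i = j := by
    intro i j hij hjp heq
    have e1 : (l.rotate i).rotate (ℓ - i) = l := by
      rw [List.rotate_rotate]
      have h4 : i + (ℓ - i) = ℓ := by omega
      rw [h4, ← hl, List.rotate_length]
    have e2 : (l.rotate j).rotate (ℓ - i) = l.rotate (j - i) := by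
      rw [List.rotate_rotate]
      have h4 : j + (ℓ - i) = (j - i) + ℓ := by omega
      rw [h4, ← List.rotate_rotate]
      have h5 : (l.rotate (j - i)).length = ℓ := by rw [List.length_rotate, hl]
      rw [← h5, List.rotate_length]
    rw [heq, e2] at e1
    rcases Nat.eq_zero_or_pos (j - i) with h0 | hpos
    · omega
    · exact absurd e1 (hmin _ hpos (by omega))
  have hinj : Set.InjOn (l.rotate ·) ↑(Finset.range p) := by
    intro i hi j hj heq
    rw [Finset.mem_coe, Finset.mem_range] at hi hj
    rcases le_total i j with h | h
    · exact hkey i j h hj heq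
    · exact (hkey j i h hi heq.symm).symm
  have horbcard : ((Finset.range ℓ).image (l.rotate ·)).card = p := by
    rw [horb, Finset.card_image_of_injOn hinj, Finset.card_range]
  have hstabcard : ((Finset.range ℓ).filter (fun k => l.rotate k = l)).card = ℓ / p := by
    rw [hstab, Finset.card_image_of_injective _
      (fun a b h => Nat.eq_of_mul_eq_mul_left hppos h), Finset.card_range]
  rw [horbcard, hstabcard, Nat.div_mul_cancel hpl]

end Burnside

section Main

noncomputable def orbF (g ℓ : ℕ) (l : List (Fin g × Bool)) : Finset (List (Fin g × Bool)) :=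
  (Finset.range ℓ).image (l.rotate ·)

lemma mem_orbF {g ℓ : ℕ} (hℓ : 0 < ℓ) {l m : List (Fin g × Bool)} (hlen : l.length = ℓ) :
    m ∈ orbF g ℓ l ↔ ∃ k, m = l.rotate k := by
  unfold orbF
  simp only [Finset.mem_image, Finset.mem_range]
  constructor
  · rintro ⟨k, hk, rfl⟩
    exact ⟨k, rfl⟩
  · rintro ⟨k, rfl⟩
    exact ⟨k % ℓ, Nat.mod_lt _ hℓ, by rw [← hlen, List.rotate_mod]⟩

lemma orbF_subset {g ℓ : ℕ} (hℓ : 0 < ℓ) {l m : List (Fin g × Bool)} (hlen : l.length = ℓ)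
    (h : ∃ k, m = l.rotate k) : orbF g ℓ m ⊆ orbF g ℓ l := by
  obtain ⟨k, rfl⟩ := h
  intro x hx
  rw [mem_orbF hℓ (by rw [List.length_rotate]; exact hlen)] at hx
  obtain ⟨j, rfl⟩ := hx
  rw [mem_orbF hℓ hlen]
  exact ⟨k + j, by rw [List.rotate_rotate]⟩

lemma orbF_eq {g ℓ : ℕ} (hℓ : 0 < ℓ) {l m : List (Fin g × Bool)} (hlen : l.length = ℓ)
    (hm : m ∈ orbF g ℓ l) : orbF g ℓ m = orbF g ℓ l := by
  obtain ⟨k, rfl⟩ := (mem_orbF hℓ hlen).mp hm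
  apply Finset.Subset.antisymm
  · exact orbF_subset hℓ hlen ⟨k, rfl⟩
  · apply orbF_subset hℓ (by rw [List.length_rotate]; exact hlen)
    refine ⟨ℓ - k % ℓ, ?_⟩
    rw [List.rotate_rotate]
    have hdm := Nat.div_add_mod k ℓ
    have hmlt := Nat.mod_lt k hℓ
    have hmul : ℓ * (k / ℓ + 1) = ℓ * (k / ℓ) + ℓ := by ring
    have he : k + (ℓ - k % ℓ) = ℓ * (k / ℓ + 1) := by omega
    rw [he]
    exact (rotate_mul l ℓ _ (by rw [← hlen, List.rotate_length])).symm

lemma self_mem_orbF {g ℓ : ℕ} (hℓ : 0 < ℓ) {l : List (Fin g × Bool)} (hlen : l.length = ℓ) :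
    l ∈ orbF g ℓ l :=
  (mem_orbF hℓ hlen).mpr ⟨0, (List.rotate_zero l).symm⟩

lemma card_fix {g ℓ d : ℕ} (hℓ : 0 < ℓ) (hd : 0 < d) (hdvd : d ∣ ℓ) :
    ((CW g ℓ).filter (fun l => l.rotate d = l)).card = (CW g d).card := by
  classical
  have hq : 0 < ℓ / d := Nat.div_pos (Nat.le_of_dvd hℓ hdvd) hd
  apply Finset.card_bij (fun l _ => l.take d)
  · intro l hl
    rw [Finset.mem_filter, mem_CW] at hl
    obtain ⟨⟨hlen, hcr⟩, hrot⟩ := hl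
    have hdle : d ≤ l.length := by rw [hlen]; exact Nat.le_of_dvd hℓ hdvd
    have hper := eq_flatten_replicate_of_rotate hd ℓ l hlen hdvd hrot
    rw [mem_CW]
    refine ⟨by rw [List.length_take]; omega, ?_⟩
    have htne : l.take d ≠ [] := by
      intro h
      have h2 := congrArg List.length h
      rw [List.length_take, List.length_nil] at h2
      omega
    rw [← cr_flatten_replicate_iff (l.take d) htne (ℓ / d) hq, ← hper]
    exact hcr
  · intro l₁ h₁ l₂ h₂ he
    rw [Finset.mem_filter, mem_CW] at h₁ h₂
    have e₁ := eq_flatten_replicate_of_rotate hd ℓ l₁ h₁.1.1 hdvd h₁.2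
    have e₂ := eq_flatten_replicate_of_rotate hd ℓ l₂ h₂.1.1 hdvd h₂.2
    rw [e₁, e₂, he]
  · intro u hu
    rw [mem_CW] at hu
    obtain ⟨hulen, hucr⟩ := hu
    have hune : u ≠ [] := by
      intro h
      rw [h] at hulen
      simp at hulen
      omega
    refine ⟨(List.replicate (ℓ / d) u).flatten, ?_, ?_⟩
    · rw [Finset.mem_filter, mem_CW]
      refine ⟨⟨?_, ?_⟩, ?_⟩
      · rw [length_flatten_replicate, hulen, Nat.div_mul_cancel hdvd]
      · rw [cr_flatten_replicate_iff u hune (ℓ / d) hq]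
        exact hucr
      · have h3 := rotate_flatten_replicate (ℓ / d) u hq
        rw [hulen] at h3
        exact h3
    · obtain ⟨q, hqe⟩ : ∃ q, ℓ / d = q + 1 := ⟨ℓ / d - 1, by omega⟩
      rw [hqe, flatten_replicate_succ, List.take_left' hulen]

theorem count_reduced_necklaces (g ℓ : ℕ) (hg : 1 ≤ g) (hℓ : 1 ≤ ℓ) :
    ℓ * {c : Set (List (Fin g × Bool)) | ∃ l, l.length = ℓ ∧ CyclicallyReduced l ∧
          c = {l' | ∃ k, l' = l.rotate k}}.ncard =
      ∑ d ∈ ℓ.divisors, d.totient * Cred g (ℓ / d) := by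
  classical
  have hℓ0 : 0 < ℓ := hℓ
  set T : Finset (Finset (List (Fin g × Bool))) := (CW g ℓ).image (orbF g ℓ) with hT
  -- Step 1: the set of necklaces is the coercion of T
  have hset : {c : Set (List (Fin g × Bool)) | ∃ l, l.length = ℓ ∧ CyclicallyReduced l ∧
      c = {l' | ∃ k, l' = l.rotate k}}
      = (fun f : Finset (List (Fin g × Bool)) => (↑f : Set (List (Fin g × Bool)))) '' ↑T := by
    have horbset : ∀ l : List (Fin g × Bool), l.length = ℓ →
        ({l' | ∃ k, l' = l.rotate k} : Set (List (Fin g × Bool))) = ↑(orbF g ℓ l) := by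
      intro l hlen
      ext l'
      rw [Set.mem_setOf_eq, Finset.mem_coe, mem_orbF hℓ0 hlen]
    ext c
    simp only [Set.mem_setOf_eq, Set.mem_image, Finset.mem_coe, hT, Finset.mem_image]
    constructor
    · rintro ⟨l, hlen, hcr, rfl⟩
      exact ⟨orbF g ℓ l, ⟨l, mem_CW.mpr ⟨hlen, hcr⟩, rfl⟩, (horbset l hlen).symm⟩
    · rintro ⟨f, ⟨l, hl, rfl⟩, rfl⟩
      obtain ⟨hlen, hcr⟩ := mem_CW.mp hl
      exact ⟨l, hlen, hcr, (horbset l hlen).symm⟩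
  rw [hset, Set.ncard_image_of_injective _ Finset.coe_injective, Set.ncard_coe_finset]
  -- Step 2: partition of CW g ℓ into orbits
  have hSbiUnion : CW g ℓ = T.biUnion id := by
    ext l
    simp only [Finset.mem_biUnion, id, hT, Finset.mem_image]
    constructor
    · intro hl
      exact ⟨orbF g ℓ l, ⟨l, hl, rfl⟩, self_mem_orbF hℓ0 (mem_CW.mp hl).1⟩
    · rintro ⟨o, ⟨m, hm, rfl⟩, hlo⟩
      obtain ⟨hmlen, hmcr⟩ := mem_CW.mp hm
      obtain ⟨k, rfl⟩ := (mem_orbF hℓ0 hmlen).mp hlo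
      exact mem_CW.mpr ⟨by rw [List.length_rotate]; exact hmlen, cr_rotate _ _ hmcr⟩
  have hdisjT : (↑T : Set (Finset (List (Fin g × Bool)))).PairwiseDisjoint id := by
    intro o₁ h₁ o₂ h₂ hne
    rw [Finset.mem_coe, hT, Finset.mem_image] at h₁ h₂
    obtain ⟨l₁, hl₁, rfl⟩ := h₁
    obtain ⟨l₂, hl₂, rfl⟩ := h₂
    simp only [Function.onFun, id]
    rw [Finset.disjoint_left]
    intro x hx₁ hx₂
    have e₁ := orbF_eq hℓ0 (mem_CW.mp hl₁).1 hx₁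
    have e₂ := orbF_eq hℓ0 (mem_CW.mp hl₂).1 hx₂
    exact hne (by rw [← e₁, ← e₂])
  -- Step 3: Burnside count
  have hstabsum : ∀ o ∈ T, ∑ l ∈ o,
      ((Finset.range ℓ).filter (fun k => l.rotate k = l)).card = ℓ := by
    intro o ho
    rw [hT, Finset.mem_image] at ho
    obtain ⟨l₀, hl₀, rfl⟩ := ho
    have hlen₀ := (mem_CW.mp hl₀).1
    have hcardpos : 0 < (orbF g ℓ l₀).card :=
      Finset.card_pos.mpr ⟨l₀, self_mem_orbF hℓ0 hlen₀⟩
    have hconst : ∀ l ∈ orbF g ℓ l₀,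
        ((Finset.range ℓ).filter (fun k => l.rotate k = l)).card
          = ℓ / (orbF g ℓ l₀).card := by
      intro l hl
      have hlenl : l.length = ℓ := by
        obtain ⟨k, rfl⟩ := (mem_orbF hℓ0 hlen₀).mp hl
        rw [List.length_rotate]; exact hlen₀
      have heq := orbF_eq hℓ0 hlen₀ hl
      have hstab := stab_orb hℓ0 l hlenl
      have horbl : ((Finset.range ℓ).image (l.rotate ·)) = orbF g ℓ l := rfl
      rw [horbl, heq] at hstab
      exact (Nat.div_eq_of_eq_mul_left hcardpos hstab.symm).symm
    rw [Finset.sum_congr rfl hconst, Finset.sum_const, smul_eq_mul]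
    have hstab₀ := stab_orb hℓ0 l₀ hlen₀
    have horbl₀ : ((Finset.range ℓ).image (l₀.rotate ·)) = orbF g ℓ l₀ := rfl
    rw [horbl₀] at hstab₀
    have hdvdcard : (orbF g ℓ l₀).card ∣ ℓ := by
      refine ⟨((Finset.range ℓ).filter (fun k => l₀.rotate k = l₀)).card, ?_⟩
      rw [Nat.mul_comm]
      exact hstab₀.symm
    exact Nat.mul_div_cancel' hdvdcard
  have hcount : ∑ l ∈ CW g ℓ,
      ((Finset.range ℓ).filter (fun k => l.rotate k = l)).card = T.card * ℓ := by
    conv_lhs => rw [hSbiUnion]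
    rw [Finset.sum_biUnion hdisjT]
    simp only [id]
    rw [Finset.sum_congr rfl (fun o ho => hstabsum o ho), Finset.sum_const, smul_eq_mul]
  -- Step 4: exchange the double count
  have hswap : ∑ l ∈ CW g ℓ, ((Finset.range ℓ).filter (fun k => l.rotate k = l)).card
      = ∑ k ∈ Finset.range ℓ, ((CW g ℓ).filter (fun l => l.rotate k = l)).card := by
    simp_rw [Finset.card_filter]
    exact Finset.sum_comm
  -- Step 5: fixed points of rotation by k
  have hfix : ∀ k ∈ Finset.range ℓ,
      ((CW g ℓ).filter (fun l => l.rotate k = l)).card = Cred g (Nat.gcd ℓ k) := by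
    intro k _
    have hgpos : 0 < Nat.gcd ℓ k := Nat.gcd_pos_of_pos_left _ hℓ0
    have hgdvd : Nat.gcd ℓ k ∣ ℓ := Nat.gcd_dvd_left ℓ k
    have hfilter_eq : (CW g ℓ).filter (fun l => l.rotate k = l)
        = (CW g ℓ).filter (fun l => l.rotate (Nat.gcd ℓ k) = l) := by
      ext l
      simp only [Finset.mem_filter]
      constructor
      · rintro ⟨hl, hrot⟩
        exact ⟨hl, rotate_gcd l ℓ k
          (by rw [← (mem_CW.mp hl).1, List.rotate_length]) hrot⟩
      · rintro ⟨hl, hrot⟩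
        refine ⟨hl, ?_⟩
        obtain ⟨c, hc⟩ := Nat.gcd_dvd_right ℓ k
        rw [hc]
        exact rotate_mul _ _ _ hrot
    rw [hfilter_eq, card_fix hℓ0 hgpos hgdvd,
      card_CW_eq_Cred hg (by omega)]
  -- Step 6: group by gcd and use totient counting
  have h6 : ∑ k ∈ Finset.range ℓ, Cred g (Nat.gcd ℓ k)
      = ∑ d ∈ ℓ.divisors, (ℓ / d).totient * Cred g d := by
    rw [← Finset.sum_fiberwise_of_maps_to
      (fun k _ => Nat.mem_divisors.mpr ⟨Nat.gcd_dvd_left ℓ k, by omega⟩)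
      (fun k => Cred g (Nat.gcd ℓ k))]
    apply Finset.sum_congr rfl
    intro d hd
    have hdvd := (Nat.mem_divisors.mp hd).1
    rw [Nat.totient_div_of_dvd hdvd]
    rw [Finset.sum_congr rfl
      (fun k hk => by rw [(Finset.mem_filter.mp hk).2]), Finset.sum_const, smul_eq_mul]
  have h7 : ∑ d ∈ ℓ.divisors, (ℓ / d).totient * Cred g d
      = ∑ d ∈ ℓ.divisors, d.totient * Cred g (ℓ / d) := by
    rw [← Nat.sum_div_divisors ℓ (fun d => d.totient * Cred g (ℓ / d))]
    apply Finset.sum_congr rfl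
    intro d hd
    have hdvd := (Nat.mem_divisors.mp hd).1
    rw [Nat.div_div_self hdvd (by omega)]
  rw [Nat.mul_comm, ← hcount, hswap, Finset.sum_congr rfl hfix, h6, h7]

end Main
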